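/- Let f = sec(2x), g = 2 tan(2x), and (fD) the operator φ ↦ f·φ'. For all n ≥ 1, (fD)^n(g) = 2(n+1)! Σ_{k=0}^{⌊(n−1)/2⌋} F(n,k) f^{n+2+2k} g^{n−1−2k}, where F(n,k) = C_k·C(n−1,2k) with C_k the k-th Catalan number. -/

import Mathlib

open Finset

/-- The operator `fD : φ ↦ f·φ'` where `f = sec(2x)`. -/
noncomputable def fDop (φ : ℝ → ℝ) : ℝ → ℝ :=
  fun x => (Real.cos (2 * x))⁻¹ * deriv φ x

noncomputable def Fc (m k : ℕ) : ℝ := (catalan k : ℝ) * (m.choose (2*k) : ℝ)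

lemma catalan_cast (k : ℕ) :
    (catalan k : ℝ) = (2*k).factorial / (k.factorial * (k+1).factorial) := by
  have h := succ_mul_catalan_eq_centralBinom k
  have h2 : (k.centralBinom : ℝ) = (2*k).factorial / (k.factorial * k.factorial) := by
    rw [Nat.centralBinom, Nat.cast_choose ℝ (by omega : k ≤ 2*k),
      (by omega : 2*k - k = k)]
  have h3 : ((k:ℝ) + 1) * catalan k = (2*k).factorial / (k.factorial * k.factorial) := by
    rw [← h2, ← h]; push_cast; ring
  have hk : ((k:ℝ)+1) ≠ 0 := by positivity
  have hf : (k.factorial : ℝ) ≠ 0 := by positivity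
  rw [Nat.factorial_succ]
  push_cast
  field_simp at h3 ⊢
  linarith [h3]

lemma coeff_rec (m j : ℕ) :
    ((m:ℝ)+3) * Fc (m+1) (j+1)
      = ((m:ℝ)+3+2*((j:ℝ)+1)) * Fc m (j+1) + 4 * ((m - 2*j : ℕ) : ℝ) * Fc m j := by
  rcases lt_trichotomy (2*j+2) (m+1) with h | h | h
  · obtain ⟨a, rfl⟩ : ∃ a, m = 2*j+2+a := ⟨m - (2*j+2), by omega⟩
    unfold Fc
    rw [catalan_cast, catalan_cast,
      Nat.cast_choose ℝ (by omega : 2*(j+1) ≤ 2*j+2+a+1),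
      Nat.cast_choose ℝ (by omega : 2*(j+1) ≤ 2*j+2+a),
      Nat.cast_choose ℝ (by omega : 2*j ≤ 2*j+2+a),
      (by omega : 2*j+2+a+1 - 2*(j+1) = a+1),
      (by omega : 2*j+2+a - 2*(j+1) = a),
      (by omega : 2*j+2+a - 2*j = a+2),
      (by ring : 2*(j+1) = 2*j+1+1)]
    simp only [Nat.factorial_succ]
    have h1 : (j.factorial:ℝ) ≠ 0 := by positivity
    have h2 : ((2*j).factorial:ℝ) ≠ 0 := by positivity
    have h3 : (a.factorial:ℝ) ≠ 0 := by positivity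
    push_cast
    field_simp
    ring
  · obtain rfl : m = 2*j+1 := by omega
    have hc : (j+2) * catalan (j+1) = 2*(2*j+1) * catalan j := by
      have h1 := succ_mul_catalan_eq_centralBinom (j+1)
      have h2 := Nat.succ_mul_centralBinom_succ j
      have h3 := succ_mul_catalan_eq_centralBinom j
      have key : (j+1) * ((j+2) * catalan (j+1)) = (j+1) * (2*(2*j+1) * catalan j) := by
        rw [h1]
        calc (j+1) * (j+1).centralBinom = 2*(2*j+1) * j.centralBinom := h2
          _ = 2*(2*j+1) * ((j+1) * catalan j) := by rw [h3]
          _ = (j+1) * (2*(2*j+1) * catalan j) := by ring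
      exact Nat.eq_of_mul_eq_mul_left (by omega) key
    have hch : (2*j+1).choose (2*j) = 2*j+1 := by
      simpa using Nat.choose_symm (Nat.le_add_left 1 (2*j))
    unfold Fc
    rw [Nat.choose_eq_zero_of_lt (by omega : 2*j+1 < 2*(j+1)),
      (by omega : 2*(j+1) = 2*j+2), Nat.choose_self, hch,
      (by omega : 2*j+1 - 2*j = 1)]
    have hcr : ((j:ℝ)+2) * catalan (j+1) = 2*(2*(j:ℝ)+1) * catalan j := by
      exact_mod_cast congrArg (Nat.cast : ℕ → ℝ) hc
    push_cast
    nlinarith [hcr]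
  · unfold Fc
    rw [Nat.choose_eq_zero_of_lt (by omega : m+1 < 2*(j+1)),
      Nat.choose_eq_zero_of_lt (by omega : m < 2*(j+1))]
    rcases eq_or_lt_of_le (by omega : m ≤ 2*j) with he | hlt
    · rw [he, (by omega : 2*j - 2*j = 0)]
      norm_num
    · rw [Nat.choose_eq_zero_of_lt hlt]
      norm_num

lemma hasDerivAt_g (x : ℝ) (hx : Real.cos (2*x) ≠ 0) :
    HasDerivAt (fun y : ℝ => 2 * Real.tan (2*y)) (4 * ((Real.cos (2*x))⁻¹)^2) x := by
  have h2 : HasDerivAt (fun y : ℝ => 2*y) 2 x := by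
    simpa using (hasDerivAt_id x).const_mul 2
  have ht : HasDerivAt (fun y : ℝ => Real.tan (2*y)) (1 / Real.cos (2*x)^2 * 2) x :=
    (Real.hasDerivAt_tan hx).comp x h2
  have := ht.const_mul 2
  rw [show (4:ℝ) * ((Real.cos (2*x))⁻¹)^2 = 2 * (1 / Real.cos (2*x)^2 * 2) by ring]
  exact this


lemma hasDerivAt_f (x : ℝ) (hx : Real.cos (2*x) ≠ 0) :
    HasDerivAt (fun y : ℝ => (Real.cos (2*y))⁻¹)
      ((Real.cos (2*x))⁻¹ * (2 * Real.tan (2*x))) x := by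
  have h2 : HasDerivAt (fun y : ℝ => 2*y) 2 x := by
    simpa using (hasDerivAt_id x).const_mul 2
  have hc : HasDerivAt (fun y : ℝ => Real.cos (2*y)) (-Real.sin (2*x) * 2) x :=
    (Real.hasDerivAt_cos (2*x)).comp x h2
  have := hc.inv hx
  rw [show (Real.cos (2*x))⁻¹ * (2 * Real.tan (2*x))
      = -(-Real.sin (2*x) * 2) / Real.cos (2*x)^2 by rw [Real.tan_eq_sin_div_cos]; ring]
  exact this

lemma main_ind (n : ℕ) (hn : 1 ≤ n) : ∀ x : ℝ, Real.cos (2*x) ≠ 0 →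
    fDop^[n] (fun y : ℝ => 2 * Real.tan (2*y)) x
      = 2 * ((n+1).factorial : ℝ) * ∑ k ∈ Finset.range (n+1),
          Fc (n-1) k * ((Real.cos (2*x))⁻¹)^(n+2+2*k) * (2*Real.tan (2*x))^(n-1-2*k) := by
  induction n, hn using Nat.le_induction with
  | base =>
    intro x hx
    rw [Function.iterate_one, fDop, (hasDerivAt_g x hx).deriv]
    simp [Fc, Finset.sum_range_succ, Nat.choose]
    ring
  | succ n hn IH =>
    intro x hx
    have hopen : IsOpen {y : ℝ | Real.cos (2*y) ≠ 0} := by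
      have : Continuous (fun y : ℝ => Real.cos (2*y)) := by continuity
      exact isOpen_compl_singleton.preimage this
    have hmem : ∀ᶠ y in nhds x, Real.cos (2*y) ≠ 0 := hopen.mem_nhds hx
    have heq : fDop^[n] (fun y : ℝ => 2 * Real.tan (2*y)) =ᶠ[nhds x]
        (fun y => 2 * ((n+1).factorial : ℝ) * ∑ k ∈ Finset.range (n+1),
          Fc (n-1) k * ((Real.cos (2*y))⁻¹)^(n+2+2*k) * (2*Real.tan (2*y))^(n-1-2*k)) :=
      hmem.mono (fun y hy => IH y hy)
    have hD : ∀ k ∈ Finset.range (n+1), HasDerivAt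
        (fun y => Fc (n-1) k * ((Real.cos (2*y))⁻¹)^(n+2+2*k) * (2*Real.tan (2*y))^(n-1-2*k))
        (Fc (n-1) k * (↑(n+2+2*k) * ((Real.cos (2*x))⁻¹)^(n+2+2*k-1)
            * ((Real.cos (2*x))⁻¹ * (2*Real.tan (2*x)))) * (2*Real.tan (2*x))^(n-1-2*k)
          + Fc (n-1) k * ((Real.cos (2*x))⁻¹)^(n+2+2*k)
            * (↑(n-1-2*k) * (2*Real.tan (2*x))^(n-1-2*k-1) * (4 * ((Real.cos (2*x))⁻¹)^2))) x := by
      intro k _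
      exact (((hasDerivAt_f x hx).pow _).const_mul _).mul ((hasDerivAt_g x hx).pow _)
    have hΦ : HasDerivAt (fun y => 2 * ((n+1).factorial : ℝ) * ∑ k ∈ Finset.range (n+1),
          Fc (n-1) k * ((Real.cos (2*y))⁻¹)^(n+2+2*k) * (2*Real.tan (2*y))^(n-1-2*k))
        (2 * ((n+1).factorial : ℝ) * ∑ k ∈ Finset.range (n+1),
          (Fc (n-1) k * (↑(n+2+2*k) * ((Real.cos (2*x))⁻¹)^(n+2+2*k-1)
            * ((Real.cos (2*x))⁻¹ * (2*Real.tan (2*x)))) * (2*Real.tan (2*x))^(n-1-2*k)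
          + Fc (n-1) k * ((Real.cos (2*x))⁻¹)^(n+2+2*k)
            * (↑(n-1-2*k) * (2*Real.tan (2*x))^(n-1-2*k-1) * (4 * ((Real.cos (2*x))⁻¹)^2)))) x :=
      (HasDerivAt.fun_sum hD).const_mul _
    rw [Function.iterate_succ_apply']
    show (Real.cos (2*x))⁻¹ * deriv (fDop^[n] (fun y : ℝ => 2 * Real.tan (2*y))) x = _
    rw [heq.deriv_eq, hΦ.deriv]
    set f := (Real.cos (2*x))⁻¹ with hf
    set g := 2*Real.tan (2*x) with hg
    clear_value f g
    simp only [Nat.add_sub_cancel]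
    have hrec : ∀ k : ℕ, ((n:ℝ)+2) * Fc n k
        = ((n:ℝ)+2+2*(k:ℝ)) * Fc (n-1) k
          + (if k = 0 then 0 else 4 * ((n-1-2*(k-1) : ℕ):ℝ) * Fc (n-1) (k-1)) := by
      intro k
      cases k with
      | zero => simp [Fc]
      | succ j =>
        have h := coeff_rec (n-1) j
        rw [Nat.sub_add_cancel hn] at h
        rw [show ((n-1:ℕ):ℝ) = (n:ℝ) - 1 from by
          have : (1:ℕ) ≤ n := hn
          push_cast [this]; ring] at h
        rw [show (n:ℝ)-1+3 = (n:ℝ)+2 from by ring] at h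
        rw [if_neg (Nat.succ_ne_zero j)]
        simp only [Nat.succ_sub_one]
        push_cast
        linear_combination h
    have key : ∑ k ∈ Finset.range (n+1+1), ((n:ℝ)+2) * (Fc n k * f^(n+1+2+2*k) * g^(n-2*k))
        = ∑ k ∈ Finset.range (n+1),
            f * (Fc (n-1) k * (↑(n+2+2*k) * f^(n+2+2*k-1) * (f * g)) * g^(n-1-2*k)
              + Fc (n-1) k * f^(n+2+2*k)
                * (↑(n-1-2*k) * g^(n-1-2*k-1) * (4 * f^2))) := by
      have step1 : ∑ k ∈ Finset.range (n+1+1), ((n:ℝ)+2) * (Fc n k * f^(n+1+2+2*k) * g^(n-2*k))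
          = ∑ k ∈ Finset.range (n+1+1),
              (((n:ℝ)+2+2*(k:ℝ)) * Fc (n-1) k * (f^(n+1+2+2*k) * g^(n-2*k))
               + (if k = 0 then 0 else 4 * ((n-1-2*(k-1) : ℕ):ℝ) * Fc (n-1) (k-1))
                  * (f^(n+1+2+2*k) * g^(n-2*k))) := by
        refine Finset.sum_congr rfl fun k _ => ?_
        linear_combination (hrec k) * (f^(n+1+2+2*k) * g^(n-2*k))
      have hA : Fc (n-1) (n+1) = 0 := by
        unfold Fc
        rw [Nat.choose_eq_zero_of_lt (by omega)]
        simp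
      have hAsum : (∑ k ∈ Finset.range (n+1+1),
            ((n:ℝ)+2+2*(k:ℝ)) * Fc (n-1) k * (f^(n+1+2+2*k) * g^(n-2*k)))
          = ∑ k ∈ Finset.range (n+1),
            ((n:ℝ)+2+2*(k:ℝ)) * Fc (n-1) k * (f^(n+1+2+2*k) * g^(n-2*k)) := by
        rw [Finset.sum_range_succ, hA]
        ring
      have hBsum : (∑ k ∈ Finset.range (n+1+1),
            (if k = 0 then (0:ℝ) else 4 * ((n-1-2*(k-1) : ℕ):ℝ) * Fc (n-1) (k-1))
              * (f^(n+1+2+2*k) * g^(n-2*k)))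
          = ∑ k ∈ Finset.range (n+1),
            4 * ((n-1-2*k : ℕ):ℝ) * Fc (n-1) k * (f^(n+1+2+2*(k+1)) * g^(n-2*(k+1))) := by
        rw [Finset.sum_range_succ']
        simp only [Nat.succ_ne_zero, if_false, Nat.add_sub_cancel, if_pos, ite_false, ite_true,
          zero_mul, add_zero]
      rw [step1, Finset.sum_add_distrib, hAsum, hBsum, ← Finset.sum_add_distrib]
      refine Finset.sum_congr rfl fun k hk => ?_
      rcases le_or_gt (2*k+1) n with hcase | hcase
      · rw [show n+2+2*k-1 = n+1+2*k from by omega,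
          show n-1-2*k-1 = n-2*(k+1) from by omega,
          show n-2*k = (n-1-2*k)+1 from by omega]
        push_cast
        ring
      · have hF : Fc (n-1) k = 0 := by
          unfold Fc
          rw [Nat.choose_eq_zero_of_lt (by omega)]
          simp
        rw [hF]
        ring
    rw [show ((n+1+1).factorial:ℝ) = ((n:ℝ)+2)*((n+1).factorial:ℝ) from by
      rw [Nat.factorial_succ]; push_cast; ring]
    rw [← Finset.mul_sum, ← Finset.mul_sum] at key
    linear_combination (-2*((n+1).factorial:ℝ)) * key

/-- For all `n ≥ 1` and `x` with `cos(2x) ≠ 0`,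
`(fD)^n(g) = 2(n+1)! Σ_{k=0}^{⌊(n−1)/2⌋} F(n,k) f^{n+2+2k} g^{n−1−2k}`,
where `f = sec(2x)`, `g = 2 tan(2x)` and `F(n,k) = C_k·C(n−1,2k)`,
`C_k` being the `k`-th Catalan number. -/
theorem fD_iterate_tan (n : ℕ) (hn : 1 ≤ n) (x : ℝ) (hx : Real.cos (2 * x) ≠ 0) :
    fDop^[n] (fun x : ℝ => 2 * Real.tan (2 * x)) x =
      2 * ((n + 1).factorial : ℝ) * ∑ k ∈ Finset.range ((n - 1) / 2 + 1),
        (catalan k : ℝ) * ((n - 1).choose (2 * k)) *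
          ((Real.cos (2 * x))⁻¹) ^ (n + 2 + 2 * k) *
          (2 * Real.tan (2 * x)) ^ (n - 1 - 2 * k) := by
  rw [show (fun x : ℝ => 2 * Real.tan (2 * x)) = (fun y : ℝ => 2 * Real.tan (2*y)) from rfl,
    main_ind n hn x hx]
  congr 1
  refine (Finset.sum_subset (Finset.range_subset_range.mpr (by omega)) fun k hk hk2 => ?_).symm
  simp only [Finset.mem_range] at hk hk2
  have h1 : n - 1 < 2*k := by omega
  simp only [Fc]
  rw [Nat.choose_eq_zero_of_lt h1]
  simp
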